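/- Let m ≥ 1, n = m+1, h > 0, z_F > 0, and let D ∈ ℝⁿ have entries D_1,…,D_n with D_k > 0 for all k. With the convention v₀ := 0 and D_{k+1/2} := (D_k + D_{k+1})/2, set Term₁(v) = (1/z_F)·Σ_{k=1}^{m} h·D_{k+1/2}·((v_k − v_{k−1})/h)² and S_h = z_F·Σ_{k=1}^{m} h/D_{k+1/2}. Then for every v ∈ ℝ^m and every 1 ≤ i ≤ m, one has v_i² ≤ Term₁(v)·S_h; in particular max_{1≤i≤m} v_i² ≤ Term₁(v)·S_h (a discrete Sobolev-type bound). -/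

import Mathlib

open Finset

/-- 1-based access to the entries of a finite vector, with value `0` at index `0`
and out of range (this encodes the convention `v₀ = 0`). -/
def pad1 {n : ℕ} (v : Fin n → ℝ) : ℕ → ℝ :=
  fun k => if hk : k - 1 < n then (if k = 0 then 0 else v ⟨k - 1, hk⟩) else 0

/-- `D_{k+1/2} = (D_k + D_{k+1})/2` (1-based mathematical indexing). -/
noncomputable def Dhalf {n : ℕ} (D : Fin n → ℝ) (k : ℕ) : ℝ :=
  (pad1 D k + pad1 D (k + 1)) / 2

/-- `Term₁(v) = (1/z_F) Σ_{k=1}^m h D_{k+1/2} ((v_k − v_{k−1})/h)²` with `v₀ = 0`. -/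
noncomputable def term1 (m : ℕ) (h zF : ℝ) (D : Fin (m + 1) → ℝ) (v : Fin m → ℝ) : ℝ :=
  (1 / zF) * ∑ k ∈ Finset.Icc 1 m,
    h * Dhalf D k * ((pad1 v k - pad1 v (k - 1)) / h) ^ 2

/-- `S_h = z_F Σ_{k=1}^m h / D_{k+1/2}`. -/
noncomputable def Sh (m : ℕ) (h zF : ℝ) (D : Fin (m + 1) → ℝ) : ℝ :=
  zF * ∑ k ∈ Finset.Icc 1 m, h / Dhalf D k

theorem stmt_13 (m : ℕ) (hm : 1 ≤ m) (h zF : ℝ) (hh : 0 < h) (hzF : 0 < zF)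
    (D : Fin (m + 1) → ℝ) (hD : ∀ k, 0 < D k) :
    ∀ (v : Fin m → ℝ) (i : Fin m),
      (v i) ^ 2 ≤ term1 m h zF D v * Sh m h zF D := by
  intro v i
  -- Dhalf positivity on Icc 1 m
  have hDhalf : ∀ k ∈ Finset.Icc 1 m, 0 < Dhalf D k := by
    intro k hk
    simp only [Finset.mem_Icc] at hk
    have h1 : k - 1 < m + 1 := by omega
    have h2 : k + 1 - 1 < m + 1 := by omega
    unfold Dhalf pad1
    rw [dif_pos h1, dif_pos h2, if_neg (by omega), if_neg (by omega)]
    have := hD ⟨k - 1, h1⟩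
    have := hD ⟨k + 1 - 1, h2⟩
    linarith
  set N := (i : ℕ) + 1 with hN
  have hNm : N ≤ m := i.isLt
  have hvi : v i = pad1 v N := by
    have h1 : N - 1 < m := by omega
    simp only [pad1, hN]
    rw [dif_pos (by omega : N - 1 < m), if_neg (by omega)]
    congr 1
    all_goals simp
  -- telescoping
  have hv0 : pad1 v 0 = 0 := by simp [pad1]
  have htel : ∑ k ∈ Finset.Icc 1 N, (pad1 v k - pad1 v (k - 1)) = pad1 v N := by
    rw [show Finset.Icc 1 N = Finset.Ico 1 (N + 1) by rw [Finset.Ico_add_one_right_eq_Icc],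
      Finset.sum_Ico_eq_sum_range]
    have h1 : N + 1 - 1 = N := by omega
    rw [h1]
    have h2 : ∀ j ∈ Finset.range N,
        pad1 v (1 + j) - pad1 v (1 + j - 1) = pad1 v (j + 1) - pad1 v j := by
      intro j _
      congr 2 <;> omega
    rw [Finset.sum_congr rfl h2, Finset.sum_range_sub (fun j => pad1 v j), hv0, sub_zero]
  -- Cauchy-Schwarz setup
  set f : ℕ → ℝ := fun k => (pad1 v k - pad1 v (k - 1)) * Real.sqrt (Dhalf D k / h) with hf
  set g : ℕ → ℝ := fun k => Real.sqrt (h / Dhalf D k) with hg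
  have hsub : Finset.Icc 1 N ⊆ Finset.Icc 1 m := Finset.Icc_subset_Icc_right hNm
  have hfg : ∀ k ∈ Finset.Icc 1 N, f k * g k = pad1 v k - pad1 v (k - 1) := by
    intro k hk
    have hDk := hDhalf k (hsub hk)
    simp only [hf, hg]
    rw [mul_assoc, ← Real.sqrt_mul (by positivity)]
    have : Dhalf D k / h * (h / Dhalf D k) = 1 := by field_simp
    rw [this, Real.sqrt_one, mul_one]
  have hf2 : ∀ k ∈ Finset.Icc 1 m,
      f k ^ 2 = h * Dhalf D k * ((pad1 v k - pad1 v (k - 1)) / h) ^ 2 := by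
    intro k hk
    have hDk := hDhalf k hk
    simp only [hf]
    rw [mul_pow, Real.sq_sqrt (by positivity)]
    field_simp
  have hg2 : ∀ k ∈ Finset.Icc 1 m, g k ^ 2 = h / Dhalf D k := by
    intro k hk
    have hDk := hDhalf k hk
    simp only [hg]
    rw [Real.sq_sqrt (by positivity)]
  have hCS := Finset.sum_mul_sq_le_sq_mul_sq (Finset.Icc 1 N) f g
  have hstep1 : (v i) ^ 2 ≤ (∑ k ∈ Finset.Icc 1 N, f k ^ 2) * ∑ k ∈ Finset.Icc 1 N, g k ^ 2 := by
    rw [hvi, ← htel, ← Finset.sum_congr rfl hfg]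
    exact hCS
  have hmono1 : (∑ k ∈ Finset.Icc 1 N, f k ^ 2) ≤ ∑ k ∈ Finset.Icc 1 m, f k ^ 2 :=
    Finset.sum_le_sum_of_subset_of_nonneg hsub (fun k _ _ => sq_nonneg _)
  have hmono2 : (∑ k ∈ Finset.Icc 1 N, g k ^ 2) ≤ ∑ k ∈ Finset.Icc 1 m, g k ^ 2 :=
    Finset.sum_le_sum_of_subset_of_nonneg hsub (fun k _ _ => sq_nonneg _)
  have hstep2 : (v i) ^ 2 ≤ (∑ k ∈ Finset.Icc 1 m, f k ^ 2) * ∑ k ∈ Finset.Icc 1 m, g k ^ 2 := by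
    refine hstep1.trans (mul_le_mul hmono1 hmono2 ?_ ?_)
    · exact Finset.sum_nonneg fun k _ => sq_nonneg _
    · exact Finset.sum_nonneg fun k _ => sq_nonneg _
  have hfin : term1 m h zF D v * Sh m h zF D
      = (∑ k ∈ Finset.Icc 1 m, f k ^ 2) * ∑ k ∈ Finset.Icc 1 m, g k ^ 2 := by
    rw [term1, Sh, Finset.sum_congr rfl hf2, Finset.sum_congr rfl hg2]
    have hz : zF ≠ 0 := ne_of_gt hzF
    field_simp
  rw [hfin]
  exact hstep2
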